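/- Let q ∈ (0,1) and θ ∈ ℝ. Then the symmetric partial sums S_N := Σ_{n=−N}^{N} (1 + q^{2n}·q e^{−iθ})/(1 − q^{2n}·q e^{−iθ}) converge to a limit L ∈ ℂ as N → ∞, and Re L = 1. Equivalently, Villat's kernel satisfies Re 𝒦_q(q, e^{iθ}) = 1 for every q ∈ (0,1) and every θ ∈ ℝ. -/

import Mathlib

open Filter Topology

private lemma villat_re (θ r : ℝ) (h : 1 - 2*r*Real.cos θ + r^2 ≠ 0) :
    ((1 + (r:ℂ) * ((1:ℂ) * Complex.exp (-(θ:ℂ)*Complex.I))) /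
      (1 - (r:ℂ) * ((1:ℂ) * Complex.exp (-(θ:ℂ)*Complex.I)))).re
      = (1 - r^2)/(1 - 2*r*Real.cos θ + r^2) := by
  have he : (-(θ:ℂ)) = ((-θ:ℝ):ℂ) := by push_cast; ring
  rw [he, one_mul, Complex.div_re]
  simp only [Complex.normSq_apply, Complex.exp_ofReal_mul_I_re, Complex.exp_ofReal_mul_I_im,
    Complex.add_re, Complex.sub_re, Complex.mul_re, Complex.mul_im, Complex.add_im, Complex.sub_im,
    Complex.one_re, Complex.one_im, Complex.ofReal_re, Complex.ofReal_im, Real.cos_neg, Real.sin_neg]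
  have hs := Real.sin_sq_add_cos_sq θ
  have hd : (1 - (r * Real.cos θ - 0 * -Real.sin θ)) * (1 - (r * Real.cos θ - 0 * -Real.sin θ)) +
          (0 - (r * -Real.sin θ + 0 * Real.cos θ)) * (0 - (r * -Real.sin θ + 0 * Real.cos θ))
      = 1 - 2*r*Real.cos θ + r^2 := by linear_combination (r^2) * hs
  rw [hd, ← add_div, div_eq_div_iff h h]
  linear_combination (-(r^2) * (1 - 2*r*Real.cos θ + r^2)) * hs

private lemma villat_denom_pos (r θ : ℝ) (hr0 : 0 < r) (hr1 : r ≠ 1) :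
    0 < 1 - 2*r*Real.cos θ + r^2 := by
  have h1 : (1 - r)^2 > 0 := by
    have : (1:ℝ) - r ≠ 0 := by intro h; apply hr1; linarith
    positivity
  nlinarith [Real.cos_le_one θ]

private lemma villat_odd (r θ : ℝ) (hr0 : 0 < r) (hr1 : r ≠ 1) :
    (1 - (r⁻¹)^2)/(1 - 2*r⁻¹*Real.cos θ + (r⁻¹)^2)
      = -((1 - r^2)/(1 - 2*r*Real.cos θ + r^2)) := by
  have h1 := villat_denom_pos r θ hr0 hr1
  have h2 := villat_denom_pos r⁻¹ θ (by positivity) (by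
    intro h
    apply hr1
    have : r⁻¹⁻¹ = (1:ℝ)⁻¹ := by rw [h]
    simpa using this)
  have hr : r ≠ 0 := ne_of_gt hr0
  rw [← neg_div, div_eq_div_iff (ne_of_gt h2) (ne_of_gt h1)]
  field_simp
  ring

private lemma bound1 (z : ℂ) (hz : ‖z‖ < 1) : ‖(1+z)/(1-z) - 1‖ ≤ 2*‖z‖/(1-‖z‖) := by
  have h2 : 1 - ‖z‖ ≤ ‖(1:ℂ) - z‖ := by
    calc 1 - ‖z‖ = ‖(1:ℂ)‖ - ‖z‖ := by simp
      _ ≤ ‖(1:ℂ) - z‖ := norm_sub_norm_le _ _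
  have h3 : (0:ℝ) < 1 - ‖z‖ := by linarith
  have hz1 : (1:ℂ) - z ≠ 0 := fun h => by
    rw [h, norm_zero] at h2; linarith
  have he : (1+z)/(1-z) - 1 = 2*z/(1-z) := by field_simp; ring
  rw [he, norm_div]
  have h4 : ‖(2:ℂ)*z‖ = 2*‖z‖ := by simp [norm_mul]
  rw [h4]
  gcongr

private lemma bound2 (z : ℂ) (hz : 1 < ‖z‖) : ‖(1+z)/(1-z) + 1‖ ≤ 2/(‖z‖-1) := by
  have h2 : ‖z‖ - 1 ≤ ‖(1:ℂ) - z‖ := by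
    calc ‖z‖ - 1 = ‖z‖ - ‖(1:ℂ)‖ := by simp
      _ ≤ ‖z - 1‖ := norm_sub_norm_le _ _
      _ = ‖(1:ℂ) - z‖ := by rw [norm_sub_rev]
  have h3 : (0:ℝ) < ‖z‖ - 1 := by linarith
  have hz1 : (1:ℂ) - z ≠ 0 := fun h => by
    rw [h, norm_zero] at h2; linarith
  have he : (1+z)/(1-z) + 1 = 2/(1-z) := by field_simp; ring
  rw [he, norm_div]
  have h4 : ‖(2:ℂ)‖ = 2 := by simp
  rw [h4]
  gcongr

/-- Villat's kernel normalization: for `q ∈ (0,1)` and `θ ∈ ℝ`, the symmetric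
partial sums `∑_{n=-N}^{N} (1 + q^{2n}·q e^{-iθ})/(1 - q^{2n}·q e^{-iθ})` converge
to a limit `L ∈ ℂ` with `Re L = 1`; i.e., `Re 𝒦_q(q, e^{iθ}) = 1`. -/
theorem stmt8 (q : ℝ) (hq : q ∈ Set.Ioo (0:ℝ) 1) (θ : ℝ) :
    ∃ L : ℂ, Tendsto
      (fun N : ℕ => ∑ n ∈ Finset.Icc (-(N : ℤ)) (N : ℤ),
        (1 + (q : ℂ) ^ (2 * n) * ((q : ℂ) * Complex.exp (-(θ : ℂ) * Complex.I))) /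
          (1 - (q : ℂ) ^ (2 * n) * ((q : ℂ) * Complex.exp (-(θ : ℂ) * Complex.I))))
      atTop (𝓝 L) ∧ L.re = 1 := by
  obtain ⟨hq0, hq1⟩ := hq
  have hqC : (q:ℂ) ≠ 0 := by exact_mod_cast ne_of_gt hq0
  set w : ℂ := (q : ℂ) * Complex.exp (-(θ : ℂ) * Complex.I) with hw
  set f : ℤ → ℂ := fun n => (1 + (q:ℂ)^(2*n) * w) / (1 - (q:ℂ)^(2*n) * w) with hf
  have hz : ∀ n : ℤ, (q:ℂ)^(2*n) * w = ((q ^ (2*n+1) : ℝ) : ℂ) *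
      ((1:ℂ) * Complex.exp (-(θ:ℂ)*Complex.I)) := by
    intro n
    rw [hw, Complex.ofReal_zpow, zpow_add₀ hqC, zpow_one, one_mul]
    ring
  have hrpos : ∀ n : ℤ, 0 < q ^ (2*n+1) := fun n => zpow_pos hq0 _
  have hrne1 : ∀ n : ℤ, q ^ (2*n+1) ≠ 1 := by
    intro n h
    have := (zpow_eq_one_iff_right₀ (le_of_lt hq0) (ne_of_lt hq1)).mp h
    omega
  have hdpos : ∀ n : ℤ, 0 < 1 - 2*(q^(2*n+1))*Real.cos θ + (q^(2*n+1))^2 :=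
    fun n => villat_denom_pos _ θ (hrpos n) (hrne1 n)
  have hre : ∀ n : ℤ, (f n).re
      = (1 - (q^(2*n+1))^2)/(1 - 2*(q^(2*n+1))*Real.cos θ + (q^(2*n+1))^2) := by
    intro n
    rw [hf]
    simp only
    rw [hz n, villat_re θ _ (ne_of_gt (hdpos n))]
  have hnorm : ∀ n : ℤ, ‖(q:ℂ)^(2*n) * w‖ = q ^ (2*n+1) := by
    intro n
    rw [hz n]
    simp [Complex.norm_exp, abs_of_pos (hrpos n), abs_of_pos hq0]
  have hsplit : ∀ N : ℕ, Finset.Icc (-(N:ℤ)-1) ((N:ℤ)+1)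
      = insert (-(N:ℤ)-1) (insert ((N:ℤ)+1) (Finset.Icc (-(N:ℤ)) (N:ℤ))) := by
    intro N
    ext m
    simp only [Finset.mem_Icc, Finset.mem_insert]
    omega
  have hmem1 : ∀ N : ℕ, (-(N:ℤ)-1) ∉ insert ((N:ℤ)+1) (Finset.Icc (-(N:ℤ)) (N:ℤ)) := by
    intro N
    simp only [Finset.mem_insert, Finset.mem_Icc]
    omega
  have hmem2 : ∀ N : ℕ, ((N:ℤ)+1) ∉ Finset.Icc (-(N:ℤ)) (N:ℤ) := by
    intro N
    simp only [Finset.mem_Icc]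
    omega
  set p : ℕ → ℂ := fun n => f ((n:ℤ)+1) + f (-(n:ℤ)-1) with hp
  have hpartial : ∀ N : ℕ, ∑ n ∈ Finset.Icc (-(N:ℤ)) (N:ℤ), f n
      = f 0 + ∑ i ∈ Finset.range N, p i := by
    intro N
    induction N with
    | zero => simp
    | succ N ih =>
      have hcast : (-((N+1:ℕ)):ℤ) = -(N:ℤ)-1 := by push_cast; ring
      have hcast2 : (((N+1:ℕ)):ℤ) = (N:ℤ)+1 := by push_cast; ring
      rw [hcast, hcast2, hsplit N, Finset.sum_insert (hmem1 N), Finset.sum_insert (hmem2 N), ih,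
        Finset.sum_range_succ, hp]
      ring
  have hq2 : q^2 < 1 := by nlinarith
  have hq1q : (0:ℝ) < 1 - q := by linarith
  have hsummable : Summable p := by
    apply Summable.of_norm_bounded (g := fun n : ℕ => (4*q/(1-q)) * (q^2)^n)
    · exact (summable_geometric_of_lt_one (by positivity) hq2).mul_left _
    · intro n
      have hm1 : 2*((n:ℤ)+1)+1 = ((2*n+3 : ℕ) : ℤ) := by push_cast; ring
      have hm2 : 2*(-(n:ℤ)-1)+1 = -((2*n+1 : ℕ) : ℤ) := by push_cast; ring
      have hn1 : ‖(q:ℂ)^(2*((n:ℤ)+1)) * w‖ = q ^ (2*n+3 : ℕ) := by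
        rw [hnorm, hm1, zpow_natCast]
      have hn2 : ‖(q:ℂ)^(2*(-(n:ℤ)-1)) * w‖ = (q ^ (2*n+1 : ℕ))⁻¹ := by
        rw [hnorm, hm2, zpow_neg, zpow_natCast]
      have hq3' : q ^ (2*n+3 : ℕ) < 1 := pow_lt_one₀ (le_of_lt hq0) hq1 (by omega)
      have hq1'' : q ^ (2*n+1 : ℕ) < 1 := pow_lt_one₀ (le_of_lt hq0) hq1 (by omega)
      have hqp : (0:ℝ) < q ^ (2*n+1 : ℕ) := by positivity
      have hb1 := bound1 ((q:ℂ)^(2*((n:ℤ)+1)) * w) (by rw [hn1]; exact hq3')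
      have hb2 := bound2 ((q:ℂ)^(2*(-(n:ℤ)-1)) * w) (by rw [hn2]; exact (one_lt_inv₀ hqp).mpr hq1'')
      rw [hn1] at hb1
      rw [hn2] at hb2
      have key : ‖p n‖ ≤ 2*(q^(2*n+3:ℕ))/(1 - q^(2*n+3:ℕ)) + 2/((q^(2*n+1:ℕ))⁻¹ - 1) := by
        calc ‖p n‖ = ‖((1 + (q:ℂ)^(2*((n:ℤ)+1)) * w)/(1 - (q:ℂ)^(2*((n:ℤ)+1)) * w) - 1)
              + ((1 + (q:ℂ)^(2*(-(n:ℤ)-1)) * w)/(1 - (q:ℂ)^(2*(-(n:ℤ)-1)) * w) + 1)‖ := by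
              rw [hp, hf]; ring_nf
          _ ≤ _ := (norm_add_le _ _).trans (add_le_add hb1 hb2)
      have hinvpos : (0:ℝ) < (q^(2*n+1:ℕ))⁻¹ - 1 := by
        rw [sub_pos]; exact (one_lt_inv₀ hqp).mpr hq1''
      have e2 : 2/((q^(2*n+1:ℕ))⁻¹ - 1) = 2*(q^(2*n+1:ℕ))/(1 - q^(2*n+1:ℕ)) := by
        rw [div_eq_div_iff (ne_of_gt hinvpos) (by linarith : (0:ℝ) < 1 - q^(2*n+1:ℕ)).ne']
        field_simp
      rw [e2] at key
      -- bound the two fractions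
      have hle1 : q^(2*n+3:ℕ) ≤ q^(2*n+1:ℕ) :=
        pow_le_pow_of_le_one (le_of_lt hq0) (le_of_lt hq1) (by omega)
      have hleq : q^(2*n+1:ℕ) ≤ q := by
        calc q^(2*n+1:ℕ) ≤ q^1 := pow_le_pow_of_le_one (le_of_lt hq0) (le_of_lt hq1) (by omega)
          _ = q := pow_one q
      have hd3 : 1 - q ≤ 1 - q^(2*n+3:ℕ) := by
        have : q^(2*n+3:ℕ) ≤ q := le_trans hle1 hleq
        linarith
      have hd1 : 1 - q ≤ 1 - q^(2*n+1:ℕ) := by linarith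
      have hA : 2*(q^(2*n+3:ℕ))/(1 - q^(2*n+3:ℕ)) ≤ 2*(q^(2*n+1:ℕ))/(1-q) :=
        div_le_div₀ (by positivity) (by linarith) hq1q hd3
      have hB : 2*(q^(2*n+1:ℕ))/(1 - q^(2*n+1:ℕ)) ≤ 2*(q^(2*n+1:ℕ))/(1-q) :=
        div_le_div₀ (by positivity) le_rfl hq1q hd1
      have hpowid : q^(2*n+1:ℕ) = q*(q^2)^n := by
        rw [pow_succ, pow_mul]; ring
      calc ‖p n‖ ≤ 2*(q^(2*n+1:ℕ))/(1-q) + 2*(q^(2*n+1:ℕ))/(1-q) :=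
            key.trans (add_le_add hA hB)
        _ = (4*q/(1-q)) * (q^2)^n := by rw [hpowid]; field_simp; ring
  -- the limit
  have htend : Tendsto (fun N => ∑ i ∈ Finset.range N, p i) atTop (𝓝 (∑' i, p i)) :=
    hsummable.hasSum.tendsto_sum_nat
  have hconv : Tendsto (fun N : ℕ => ∑ n ∈ Finset.Icc (-(N:ℤ)) (N:ℤ), f n) atTop
      (𝓝 (f 0 + ∑' i, p i)) := by
    have : (fun N : ℕ => ∑ n ∈ Finset.Icc (-(N:ℤ)) (N:ℤ), f n)
        = fun N => f 0 + ∑ i ∈ Finset.range N, p i := funext hpartial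
    rw [this]
    exact tendsto_const_nhds.add htend
  refine ⟨f 0 + ∑' i, p i, hconv, ?_⟩
  -- real part: telescoping
  have hGsum : ∀ N : ℕ, ∑ n ∈ Finset.Icc (-(N:ℤ)) (N:ℤ), (f n).re
      = (1 - (q^(2*(N:ℤ)+1))^2)/(1 - 2*(q^(2*(N:ℤ)+1))*Real.cos θ + (q^(2*(N:ℤ)+1))^2) := by
    intro N
    induction N with
    | zero => simpa using hre 0
    | succ N ih =>
      have hcast : (-((N+1:ℕ)):ℤ) = -(N:ℤ)-1 := by push_cast; ring
      have hcast2 : (((N+1:ℕ)):ℤ) = (N:ℤ)+1 := by push_cast; ring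
      rw [hcast, hcast2, hsplit N, Finset.sum_insert (hmem1 N), Finset.sum_insert (hmem2 N), ih,
        hre, hre]
      have hneg : q ^ (2*(-(N:ℤ)-1)+1) = (q ^ (2*(N:ℤ)+1))⁻¹ := by
        rw [← zpow_neg]; congr 1; ring
      rw [hneg, villat_odd (q ^ (2*(N:ℤ)+1)) θ (hrpos N) (hrne1 N)]
      have hexp : 2*((N:ℤ)+1)+1 = 2*(N:ℤ)+1+2 := by ring
      rw [hexp]
      ring
  -- limit of the real parts
  have hx : ∀ N : ℕ, q ^ (2*(N:ℤ)+1) = q*(q^2)^N := by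
    intro N
    have : (2*(N:ℤ)+1) = ((2*N+1 : ℕ) : ℤ) := by push_cast; ring
    rw [this, zpow_natCast, pow_succ, pow_mul]; ring
  have hx0 : Tendsto (fun N : ℕ => q ^ (2*(N:ℤ)+1)) atTop (𝓝 0) := by
    simp only [hx]
    have := (tendsto_pow_atTop_nhds_zero_of_lt_one (by positivity : (0:ℝ) ≤ q^2) hq2).const_mul q
    simpa using this
  have hG1 : Tendsto (fun N : ℕ =>
      (1 - (q^(2*(N:ℤ)+1))^2)/(1 - 2*(q^(2*(N:ℤ)+1))*Real.cos θ + (q^(2*(N:ℤ)+1))^2))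
      atTop (𝓝 1) := by
    have hnum : Tendsto (fun N : ℕ => 1 - (q^(2*(N:ℤ)+1))^2) atTop (𝓝 (1 - 0^2)) :=
      tendsto_const_nhds.sub (hx0.pow 2)
    have hden : Tendsto (fun N : ℕ => 1 - 2*(q^(2*(N:ℤ)+1))*Real.cos θ + (q^(2*(N:ℤ)+1))^2)
        atTop (𝓝 (1 - 2*0*Real.cos θ + 0^2)) :=
      (tendsto_const_nhds.sub (((hx0.const_mul 2)).mul_const (Real.cos θ))).add (hx0.pow 2)
    have := hnum.div hden (by norm_num)
    simp at this
    exact this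
  have hRe : Tendsto (fun N : ℕ => (∑ n ∈ Finset.Icc (-(N:ℤ)) (N:ℤ), f n).re) atTop
      (𝓝 ((f 0 + ∑' i, p i).re)) :=
    (Complex.continuous_re.tendsto _).comp hconv
  have hRe' : Tendsto (fun N : ℕ => (∑ n ∈ Finset.Icc (-(N:ℤ)) (N:ℤ), f n).re) atTop (𝓝 1) := by
    have : (fun N : ℕ => (∑ n ∈ Finset.Icc (-(N:ℤ)) (N:ℤ), f n).re)
        = fun N : ℕ => (1 - (q^(2*(N:ℤ)+1))^2)/(1 - 2*(q^(2*(N:ℤ)+1))*Real.cos θ + (q^(2*(N:ℤ)+1))^2) := by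
      funext N
      rw [Complex.re_sum, hGsum N]
    rw [this]
    exact hG1
  exact tendsto_nhds_unique hRe hRe'
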